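/- Let Γ be a homogeneous structure over a relational signature τ whose age has the Ramsey property, and let d₁, …, dₙ be elements of Γ. Let Γ* = (Γ, d₁, …, dₙ) be the expansion of Γ to the signature τ ∪ {c₁, …, cₙ} in which the constant symbol cᵢ is interpreted as dᵢ. Then for all finite substructures A*, B* of Γ* (substructures in the expanded signature contain all the dᵢ, and embeddings fix the constants) and every r ∈ ℕ, we have Γ* → (B*)^{A*}_r; hence Γ* is Ramsey. -/

import Mathlib

open FirstOrder FirstOrder.Language CategoryTheory

universe u v w

/-- The partition arrow `C → (B)^A_r`. -/
def RamseyArrow (L : FirstOrder.Language.{u, v}) (C B A : Type w)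
    [L.Structure C] [L.Structure B] [L.Structure A] (r : ℕ) : Prop :=
  ∀ χ : (A ↪[L] C) → Fin r, ∃ f : B ↪[L] C,
    ∀ e₁ e₂ : A ↪[L] B, χ (f.comp e₁) = χ (f.comp e₂)

/-- The age of `Γ`: the class of all finite structures that embed into `Γ`. -/
def FinAge (L : FirstOrder.Language.{u, v}) (Γ : Type w) [L.Structure Γ] :
    Set (Bundled.{w} L.Structure) :=
  {A | Finite A ∧ Nonempty (A ↪[L] Γ)}

/-- The Ramsey property for a class of finite structures. -/
def HasRamseyProperty (L : FirstOrder.Language.{u, v})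
    (K : Set (Bundled.{w} L.Structure)) : Prop :=
  ∀ A ∈ K, ∀ B ∈ K, ∀ r : ℕ, ∃ C ∈ K, RamseyArrow L C B A r

/-- `Γ` is homogeneous. -/
def IsHomogeneous (L : FirstOrder.Language.{u, v}) (Γ : Type w) [L.Structure Γ] : Prop :=
  ∀ A : Bundled.{w} L.Structure, Finite A → ∀ f g : A ↪[L] Γ,
    ∃ α : Γ ≃[L] Γ, ∀ a : A, α (f a) = g a

/-- Composition of pointed embeddings (embeddings of substructures of `Γ` that fix the
distinguished constants `d₁, …, dₙ`). -/
def pComp {L : FirstOrder.Language.{u, v}} {Γ : Type w} [L.Structure Γ]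
    {n : ℕ} {d : Fin n → Γ} {A B : L.Substructure Γ}
    {hdA : ∀ i, d i ∈ A} {hdB : ∀ i, d i ∈ B}
    (f : {f : B ↪[L] Γ // ∀ i, f ⟨d i, hdB i⟩ = d i})
    (e : {e : A ↪[L] B // ∀ i, (e ⟨d i, hdA i⟩ : Γ) = d i}) :
    {g : A ↪[L] Γ // ∀ i, g ⟨d i, hdA i⟩ = d i} :=
  ⟨f.1.comp e.1, fun i => by
    have h : e.1 ⟨d i, hdA i⟩ = ⟨d i, hdB i⟩ := Subtype.ext (e.2 i)
    rw [Embedding.comp_apply, h]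
    exact f.2 i⟩

/-- If `Γ` is homogeneous Ramsey and `d₁, …, dₙ ∈ Γ`, then the expansion `(Γ, d₁, …, dₙ)` by
constants is again Ramsey: substructures in the expanded signature contain all `dᵢ` and
embeddings fix them pointwise. -/
theorem stmt7 (L : FirstOrder.Language.{u, v}) [L.IsRelational]
    (Γ : Type w) [L.Structure Γ]
    (hhom : IsHomogeneous L Γ) (hram : HasRamseyProperty L (FinAge L Γ))
    (n : ℕ) (d : Fin n → Γ) (A B : L.Substructure Γ)
    (hAfin : Finite A) (hBfin : Finite B)
    (hdA : ∀ i, d i ∈ A) (hdB : ∀ i, d i ∈ B) (r : ℕ)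
    (χ : {g : A ↪[L] Γ // ∀ i, g ⟨d i, hdA i⟩ = d i} → Fin r) :
    ∃ f : {f : B ↪[L] Γ // ∀ i, f ⟨d i, hdB i⟩ = d i},
      ∀ e₁ e₂ : {e : A ↪[L] B // ∀ i, (e ⟨d i, hdA i⟩ : Γ) = d i},
        χ (pComp f e₁) = χ (pComp f e₂) := by
  classical
  -- the substructure generated by the constants: just their range, as `L` is relational
  let D : L.Substructure Γ := ⟨Set.range d, fun {m} f => isEmptyElim f⟩
  have hDmem : ∀ i, d i ∈ D := fun i => ⟨i, rfl⟩
  have hDfin : Finite D := Set.Finite.to_subtype (Set.finite_range d)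
  have hDA : D ≤ A := fun x hx => by obtain ⟨i, rfl⟩ := hx; exact hdA i
  have hDB : D ≤ B := fun x hx => by obtain ⟨i, rfl⟩ := hx; exact hdB i
  -- for each embedding of D into Γ, an automorphism of Γ pulling it back to the inclusion
  have hγ : ∀ h : D ↪[L] Γ, ∃ α : Γ ≃[L] Γ, ∀ x : D, α (h x) = (x : Γ) := by
    intro h
    obtain ⟨α, hα⟩ := hhom (Bundled.of D) hDfin h D.subtype
    exact ⟨α, fun x => hα x⟩
  choose γ hγspec using hγ
  -- "pointedize" an embedding of A into Γ
  let ρA : (A ↪[L] Γ) → (D ↪[L] Γ) := fun e => e.comp (Substructure.inclusion hDA)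
  let P : (A ↪[L] Γ) → {g : A ↪[L] Γ // ∀ i, g ⟨d i, hdA i⟩ = d i} := fun e =>
    ⟨(γ (ρA e)).toEmbedding.comp e, fun i => by
      have := hγspec (ρA e) ⟨d i, hDmem i⟩
      simpa [ρA, Embedding.comp_apply, Substructure.inclusion] using this⟩
  let χ' : (A ↪[L] Γ) → Fin r := fun e => χ (P e)
  -- apply the Ramsey property of the age
  have hAage : Bundled.of (c := L.Structure) ↥A ∈ FinAge L Γ := ⟨hAfin, ⟨A.subtype⟩⟩
  have hBage : Bundled.of (c := L.Structure) ↥B ∈ FinAge L Γ := ⟨hBfin, ⟨B.subtype⟩⟩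
  obtain ⟨C, ⟨hCfin, ⟨h⟩⟩, hC⟩ := hram _ hAage _ hBage r
  obtain ⟨f₀, hf₀⟩ := hC (fun e => χ' (h.comp e))
  set f : B ↪[L] Γ := h.comp f₀ with hf
  -- the corrected copy of B
  let β : Γ ≃[L] Γ := γ (f.comp (Substructure.inclusion hDB))
  have hβ : ∀ x : D, β (f (Substructure.inclusion hDB x)) = (x : Γ) := fun x => by
    have := hγspec (f.comp (Substructure.inclusion hDB)) x
    simpa [Embedding.comp_apply] using this
  have hFprop : ∀ i, (β.toEmbedding.comp f) ⟨d i, hdB i⟩ = d i := fun i => by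
    simpa [Substructure.inclusion, Embedding.comp_apply] using hβ ⟨d i, hDmem i⟩
  set F : {f : B ↪[L] Γ // ∀ i, f ⟨d i, hdB i⟩ = d i} := ⟨β.toEmbedding.comp f, hFprop⟩ with hF
  refine ⟨F, ?_⟩
  intro e₁ e₂
  -- key: for a pointed embedding e : A ↪ B, pointedizing f ∘ e gives β ∘ f ∘ e
  have key : ∀ e : {e : A ↪[L] B // ∀ i, (e ⟨d i, hdA i⟩ : Γ) = d i},
      pComp F e = P (f.comp e.1) := by
    intro e
    have hρ : ρA (f.comp e.1) = f.comp (Substructure.inclusion hDB) := by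
      ext x
      obtain ⟨x, i, rfl⟩ := x
      have h1 : e.1 ⟨d i, hdA i⟩ = ⟨d i, hdB i⟩ := Subtype.ext (e.2 i)
      simp [ρA, Embedding.comp_apply, Substructure.inclusion, h1]
    apply Subtype.ext
    show (β.toEmbedding.comp f).comp e.1 = (γ (ρA (f.comp e.1))).toEmbedding.comp (f.comp e.1)
    rw [hρ, Embedding.comp_assoc]
  rw [key e₁, key e₂]
  have assoc : ∀ e : A ↪[L] B, f.comp e = h.comp (f₀.comp e) := fun e => by
    rw [hf]; rfl
  show χ' (f.comp e₁.1) = χ' (f.comp e₂.1)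
  rw [assoc, assoc]
  exact hf₀ e₁.1 e₂.1
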